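/- Let n ∈ (0,2) and define κ̄_n as the unique positive solution of 1 = κ^{2-n} ∫₀^κ a^{n-1} e^{(a²-κ²)/2} da. Then κ̄_n / √n → 1 as n → 0⁺. -/

import Mathlib

set_option maxHeartbeats 1000000


open Real MeasureTheory intervalIntegral

lemma aux_integrable {n : ℝ} (hn : 0 < n) (k x y : ℝ) :
    IntervalIntegrable (fun a => a ^ (n - 1) * Real.exp ((a ^ 2 - k ^ 2) / 2)) volume x y :=
  (intervalIntegrable_rpow' (by linarith)).mul_continuousOn
    (Continuous.continuousOn (by continuity))

lemma aux_rpow_int {n : ℝ} (hn : 0 < n) (c : ℝ) :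
    ∫ a in (0:ℝ)..c, a ^ (n - 1) = c ^ n / n := by
  rw [integral_rpow (Or.inl (by linarith))]
  rw [show n - 1 + 1 = n by ring, Real.zero_rpow hn.ne']
  ring

lemma aux_exp_int {k : ℝ} (hk : k ≠ 0) (x y : ℝ) :
    ∫ a in x..y, Real.exp (k * a - k ^ 2)
      = (Real.exp (k * y - k ^ 2) - Real.exp (k * x - k ^ 2)) / k := by
  have h : ∀ a : ℝ, HasDerivAt (fun a => Real.exp (k * a - k ^ 2) / k)
      (Real.exp (k * a - k ^ 2)) a := by
    intro a
    have h1 : HasDerivAt (fun a : ℝ => k * a - k ^ 2) k a := by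
      simpa using ((hasDerivAt_id a).const_mul k).sub_const (k ^ 2)
    have h2 := (h1.exp).div_const k
    simpa [mul_div_cancel_right₀ _ hk] using h2
  rw [integral_eq_sub_of_hasDerivAt (fun a _ => h a)
    ((Real.continuous_exp.comp ((continuous_const.mul continuous_id).sub continuous_const)).intervalIntegrable x y)]
  ring

lemma aux_bounds {n : ℝ} (hn : 0 < n) (hn2 : n < 2) {k : ℝ} (hk : 0 < k)
    (heq : 1 = k ^ (2 - n) * ∫ a in (0:ℝ)..k, a ^ (n - 1) * Real.exp ((a ^ 2 - k ^ 2) / 2)) :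
    Real.sqrt n ≤ k ∧ (n < 1 → k ≤ Real.sqrt n * Real.exp (n * Real.exp 2 / 4)) := by
  have hkpow : (0:ℝ) < k ^ (2 - n) := Real.rpow_pos_of_pos hk _
  have hpowmul : k ^ (2 - n) * k ^ n = k ^ 2 := by
    rw [← Real.rpow_natCast k 2, ← Real.rpow_add hk]
    norm_num
  -- upper bound on the integral
  have hI_le : (∫ a in (0:ℝ)..k, a ^ (n - 1) * Real.exp ((a ^ 2 - k ^ 2) / 2)) ≤ k ^ n / n := by
    rw [← aux_rpow_int hn k]
    refine integral_mono_on hk.le (aux_integrable hn k 0 k)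
      (intervalIntegrable_rpow' (by linarith)) ?_
    intro a ha
    have h1 : (0:ℝ) ≤ a ^ (n - 1) := Real.rpow_nonneg ha.1 _
    have h2 : Real.exp ((a ^ 2 - k ^ 2) / 2) ≤ 1 := by
      rw [Real.exp_le_one_iff]
      nlinarith [ha.1, ha.2]
    nlinarith [Real.exp_pos ((a ^ 2 - k ^ 2) / 2)]
  have hnk2 : n ≤ k ^ 2 := by
    have h1 : (1:ℝ) ≤ k ^ (2 - n) * (k ^ n / n) :=
      heq.le.trans (mul_le_mul_of_nonneg_left hI_le hkpow.le)
    rw [← mul_div_assoc, hpowmul] at h1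
    rw [le_div_iff₀ hn, one_mul] at h1
    linarith
  have hsq : Real.sqrt n ≤ k := by
    have := Real.sqrt_le_sqrt hnk2
    rwa [Real.sqrt_sq hk.le] at this
  refine ⟨hsq, fun hn1 => ?_⟩
  -- lower bound on the full integral
  have hI_ge : Real.exp (-(k ^ 2) / 2) * (k ^ n / n)
      ≤ ∫ a in (0:ℝ)..k, a ^ (n - 1) * Real.exp ((a ^ 2 - k ^ 2) / 2) := by
    have : (∫ a in (0:ℝ)..k, a ^ (n - 1) * Real.exp (-(k ^ 2) / 2))
        ≤ ∫ a in (0:ℝ)..k, a ^ (n - 1) * Real.exp ((a ^ 2 - k ^ 2) / 2) := by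
      refine integral_mono_on hk.le
        ((intervalIntegrable_rpow' (by linarith)).mul_const _) (aux_integrable hn k 0 k) ?_
      intro a ha
      have h1 : (0:ℝ) ≤ a ^ (n - 1) := Real.rpow_nonneg ha.1 _
      have h2 : Real.exp (-(k ^ 2) / 2) ≤ Real.exp ((a ^ 2 - k ^ 2) / 2) := by
        apply Real.exp_le_exp.mpr; nlinarith [sq_nonneg a]
      nlinarith
    rwa [intervalIntegral.integral_mul_const, aux_rpow_int hn k, mul_comm] at this
  have hmain : k ^ 2 * Real.exp (-(k ^ 2) / 2) ≤ n := by
    have h1 : k ^ (2 - n) * (Real.exp (-(k ^ 2) / 2) * (k ^ n / n)) ≤ 1 :=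
      (mul_le_mul_of_nonneg_left hI_ge hkpow.le).trans_eq heq.symm
    have h2 : k ^ (2 - n) * (Real.exp (-(k ^ 2) / 2) * (k ^ n / n))
        = k ^ 2 * Real.exp (-(k ^ 2) / 2) / n := by
      field_simp
      rw [← hpowmul]
    rw [h2, div_le_one hn] at h1
    exact h1
  -- rule out k ≥ 2
  have hk2 : k < 2 := by
    by_contra hle
    push_neg at hle
    have hk1 : (1:ℝ) ≤ k := by linarith
    have hint01 := aux_integrable hn k 0 1
    have hint1k := aux_integrable hn k 1 k
    have hsplit : (∫ a in (0:ℝ)..1, a ^ (n - 1) * Real.exp ((a ^ 2 - k ^ 2) / 2))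
        + (∫ a in (1:ℝ)..k, a ^ (n - 1) * Real.exp ((a ^ 2 - k ^ 2) / 2))
        = ∫ a in (0:ℝ)..k, a ^ (n - 1) * Real.exp ((a ^ 2 - k ^ 2) / 2) :=
      integral_add_adjacent_intervals hint01 hint1k
    -- lower bound on [0,1]
    have hb1 : Real.exp (-(k ^ 2) / 2) * (1 / n)
        ≤ ∫ a in (0:ℝ)..1, a ^ (n - 1) * Real.exp ((a ^ 2 - k ^ 2) / 2) := by
      have h : (∫ a in (0:ℝ)..1, a ^ (n - 1) * Real.exp (-(k ^ 2) / 2))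
          ≤ ∫ a in (0:ℝ)..1, a ^ (n - 1) * Real.exp ((a ^ 2 - k ^ 2) / 2) := by
        refine integral_mono_on zero_le_one
          ((intervalIntegrable_rpow' (by linarith)).mul_const _) hint01 ?_
        intro a ha
        have h1 : (0:ℝ) ≤ a ^ (n - 1) := Real.rpow_nonneg ha.1 _
        have h2 : Real.exp (-(k ^ 2) / 2) ≤ Real.exp ((a ^ 2 - k ^ 2) / 2) := by
          apply Real.exp_le_exp.mpr; nlinarith [sq_nonneg a]
        nlinarith
      rwa [intervalIntegral.integral_mul_const, aux_rpow_int hn 1, Real.one_rpow, mul_comm] at h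
    -- lower bound on [1,k]
    have hb2 : k ^ (n - 1) * ((1 - Real.exp (k - k ^ 2)) / k)
        ≤ ∫ a in (1:ℝ)..k, a ^ (n - 1) * Real.exp ((a ^ 2 - k ^ 2) / 2) := by
      have h : (∫ a in (1:ℝ)..k, k ^ (n - 1) * Real.exp (k * a - k ^ 2))
          ≤ ∫ a in (1:ℝ)..k, a ^ (n - 1) * Real.exp ((a ^ 2 - k ^ 2) / 2) := by
        refine integral_mono_on hk1
          (((Real.continuous_exp.comp ((continuous_const.mul continuous_id).sub
            continuous_const)).intervalIntegrable 1 k).const_mul _) hint1k ?_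
        intro a ha
        have ha0 : (0:ℝ) < a := lt_of_lt_of_le zero_lt_one ha.1
        have h1 : k ^ (n - 1) ≤ a ^ (n - 1) :=
          Real.rpow_le_rpow_of_nonpos ha0 ha.2 (by linarith)
        have h2 : Real.exp (k * a - k ^ 2) ≤ Real.exp ((a ^ 2 - k ^ 2) / 2) := by
          apply Real.exp_le_exp.mpr; nlinarith [sq_nonneg (a - k)]
        have h3 : (0:ℝ) ≤ Real.exp (k * a - k ^ 2) := (Real.exp_pos _).le
        have h4 : (0:ℝ) ≤ k ^ (n - 1) := Real.rpow_nonneg hk.le _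
        exact mul_le_mul h1 h2 h3 (Real.rpow_nonneg ha0.le _)
      rwa [intervalIntegral.integral_const_mul, aux_exp_int hk.ne', show k * k - k ^ 2 = 0 by ring,
        Real.exp_zero, show k * 1 - k ^ 2 = k - k ^ 2 by ring] at h
    -- combine
    have hcomb : k ^ (2 - n) * (Real.exp (-(k ^ 2) / 2) * (1 / n))
        + k ^ (2 - n) * (k ^ (n - 1) * ((1 - Real.exp (k - k ^ 2)) / k)) ≤ 1 := by
      calc k ^ (2 - n) * (Real.exp (-(k ^ 2) / 2) * (1 / n))
            + k ^ (2 - n) * (k ^ (n - 1) * ((1 - Real.exp (k - k ^ 2)) / k))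
          ≤ k ^ (2 - n) * ((∫ a in (0:ℝ)..1, a ^ (n - 1) * Real.exp ((a ^ 2 - k ^ 2) / 2))
            + ∫ a in (1:ℝ)..k, a ^ (n - 1) * Real.exp ((a ^ 2 - k ^ 2) / 2)) := by
            rw [mul_add]
            exact add_le_add (mul_le_mul_of_nonneg_left hb1 hkpow.le)
              (mul_le_mul_of_nonneg_left hb2 hkpow.le)
        _ = 1 := by rw [hsplit, ← heq]
    have hpow1 : k ^ (2 - n) * k ^ (n - 1) = k := by
      rw [← Real.rpow_add hk, show 2 - n + (n - 1) = 1 by ring, Real.rpow_one]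
    have hterm2 : k ^ (2 - n) * (k ^ (n - 1) * ((1 - Real.exp (k - k ^ 2)) / k))
        = 1 - Real.exp (k - k ^ 2) := by
      rw [← mul_assoc, hpow1]
      field_simp
    rw [hterm2] at hcomb
    have hstep : k ^ (2 - n) * (Real.exp (-(k ^ 2) / 2) * (1 / n)) ≤ Real.exp (k - k ^ 2) := by
      linarith
    have hkge : (2:ℝ) ≤ k ^ (2 - n) := by
      calc (2:ℝ) ≤ k := hle
        _ = k ^ (1:ℝ) := (Real.rpow_one k).symm
        _ ≤ k ^ (2 - n) := Real.rpow_le_rpow_of_exponent_le hk1 (by linarith)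
    have hexple : Real.exp (k - k ^ 2) ≤ Real.exp (-(k ^ 2) / 2) := by
      apply Real.exp_le_exp.mpr; nlinarith
    have hepos : (0:ℝ) < Real.exp (-(k ^ 2) / 2) := Real.exp_pos _
    have : 2 * (Real.exp (-(k ^ 2) / 2) * (1 / n)) ≤ Real.exp (-(k ^ 2) / 2) := by
      calc 2 * (Real.exp (-(k ^ 2) / 2) * (1 / n))
          ≤ k ^ (2 - n) * (Real.exp (-(k ^ 2) / 2) * (1 / n)) := by
            apply mul_le_mul_of_nonneg_right hkge
            positivity
        _ ≤ Real.exp (k - k ^ 2) := hstep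
        _ ≤ Real.exp (-(k ^ 2) / 2) := hexple
    rw [show 2 * (Real.exp (-(k ^ 2) / 2) * (1 / n)) = 2 * Real.exp (-(k ^ 2) / 2) / n by ring,
      div_le_iff₀ hn] at this
    nlinarith [mul_pos hepos (by linarith : (0:ℝ) < 1 - n)]
  -- now k < 2, bootstrap
  have hksq : k ^ 2 ≤ n * Real.exp (k ^ 2 / 2) := by
    have h := hmain
    have : Real.exp (-(k ^ 2) / 2) = (Real.exp (k ^ 2 / 2))⁻¹ := by
      rw [← Real.exp_neg]; ring_nf
    rw [this] at h
    have hep : (0:ℝ) < Real.exp (k ^ 2 / 2) := Real.exp_pos _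
    calc k ^ 2 = k ^ 2 * (Real.exp (k ^ 2 / 2))⁻¹ * Real.exp (k ^ 2 / 2) := by
          field_simp
      _ ≤ n * Real.exp (k ^ 2 / 2) := mul_le_mul_of_nonneg_right h hep.le
  have hk2e : k ^ 2 ≤ n * Real.exp 2 := by
    refine hksq.trans (mul_le_mul_of_nonneg_left ?_ hn.le)
    apply Real.exp_le_exp.mpr; nlinarith
  have hfinal : k ^ 2 ≤ n * Real.exp (n * Real.exp 2 / 2) := by
    refine hksq.trans (mul_le_mul_of_nonneg_left ?_ hn.le)
    apply Real.exp_le_exp.mpr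
    linarith
  calc k = Real.sqrt (k ^ 2) := (Real.sqrt_sq hk.le).symm
    _ ≤ Real.sqrt (n * Real.exp (n * Real.exp 2 / 2)) := Real.sqrt_le_sqrt hfinal
    _ = Real.sqrt n * Real.sqrt (Real.exp (n * Real.exp 2 / 2)) := Real.sqrt_mul hn.le _
    _ = Real.sqrt n * Real.exp (n * Real.exp 2 / 4) := by
        rw [← Real.exp_half, show n * Real.exp 2 / 2 / 2 = n * Real.exp 2 / 4 by ring]

theorem stmt6 (κ : ℝ → ℝ)
    (hκ : ∀ n ∈ Set.Ioo (0:ℝ) 2, 0 < κ n ∧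
      1 = (κ n) ^ (2 - n) * ∫ a in (0:ℝ)..(κ n), a ^ (n - 1) * Real.exp ((a ^ 2 - (κ n) ^ 2) / 2))
    (huniq : ∀ n ∈ Set.Ioo (0:ℝ) 2, ∀ c : ℝ, 0 < c →
      1 = c ^ (2 - n) * ∫ a in (0:ℝ)..c, a ^ (n - 1) * Real.exp ((a ^ 2 - c ^ 2) / 2) → c = κ n) :
    Filter.Tendsto (fun n => κ n / Real.sqrt n) (nhdsWithin 0 (Set.Ioo 0 2)) (nhds 1) := by
  have hlow : ∀ᶠ n in nhdsWithin 0 (Set.Ioo 0 2), 1 ≤ κ n / Real.sqrt n := by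
    filter_upwards [self_mem_nhdsWithin] with n hn
    obtain ⟨hk, heq⟩ := hκ n hn
    have h := (aux_bounds hn.1 hn.2 hk heq).1
    rw [le_div_iff₀ (Real.sqrt_pos.mpr hn.1), one_mul]
    exact h
  have hup : ∀ᶠ n in nhdsWithin 0 (Set.Ioo 0 2),
      κ n / Real.sqrt n ≤ Real.exp (n * Real.exp 2 / 4) := by
    have hev : ∀ᶠ n in nhdsWithin (0:ℝ) (Set.Ioo 0 2), n < 1 :=
      (eventually_lt_nhds (by norm_num : (0:ℝ) < 1)).filter_mono nhdsWithin_le_nhds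
    filter_upwards [self_mem_nhdsWithin, hev] with n hn hn1
    obtain ⟨hk, heq⟩ := hκ n hn
    have h := (aux_bounds hn.1 hn.2 hk heq).2 hn1
    rw [div_le_iff₀ (Real.sqrt_pos.mpr hn.1)]
    linarith [h]
  have hexp : Filter.Tendsto (fun n : ℝ => Real.exp (n * Real.exp 2 / 4))
      (nhdsWithin 0 (Set.Ioo 0 2)) (nhds 1) := by
    have h0 : Filter.Tendsto (fun n : ℝ => Real.exp (n * Real.exp 2 / 4)) (nhds 0) (nhds 1) := by
      have hc : Continuous fun n : ℝ => Real.exp (n * Real.exp 2 / 4) := by continuity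
      simpa using hc.tendsto 0
    exact h0.mono_left nhdsWithin_le_nhds
  exact tendsto_of_tendsto_of_tendsto_of_le_of_le' tendsto_const_nhds hexp hlow hup
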